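/- If f ∈ k[x,y] satisfies f(λ,μ) ≠ 0, then the map A ↦ A^f is a bijection of k^{m×n}: for every B ∈ k^{m×n} there exists a unique A ∈ k^{m×n} with A^f = B; in particular A^f = 0 implies A = 0. -/

import Mathlib

open Matrix MvPolynomial

noncomputable def matApply {k : Type*} [Field k] {m n : ℕ}
    (L : Matrix (Fin m) (Fin m) k) (R : Matrix (Fin n) (Fin n) k)
    (A : Matrix (Fin m) (Fin n) k) (f : MvPolynomial (Fin 2) k) :
    Matrix (Fin m) (Fin n) k :=
  ∑ d ∈ f.support, MvPolynomial.coeff d f • (L ^ (d 0) * A * R ^ (d 1))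

section Aux

variable {k : Type*} [Field k] {m n : ℕ}

/-- Left multiplication by a square matrix, as an endomorphism of rectangular matrices. -/
noncomputable def lmulE (L : Matrix (Fin m) (Fin m) k) :
    Module.End k (Matrix (Fin m) (Fin n) k) where
  toFun A := L * A
  map_add' A B := Matrix.mul_add L A B
  map_smul' c A := Matrix.mul_smul L c A

noncomputable def rmulE (R : Matrix (Fin n) (Fin n) k) :
    Module.End k (Matrix (Fin m) (Fin n) k) where
  toFun A := A * R
  map_add' A B := Matrix.add_mul A B R
  map_smul' c A := Matrix.smul_mul c A R

@[simp] lemma lmulE_apply (L : Matrix (Fin m) (Fin m) k) (A : Matrix (Fin m) (Fin n) k) :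
    lmulE L A = L * A := rfl

@[simp] lemma rmulE_apply (R : Matrix (Fin n) (Fin n) k) (A : Matrix (Fin m) (Fin n) k) :
    rmulE R A = A * R := rfl

lemma lmulE_pow_apply (L : Matrix (Fin m) (Fin m) k) (i : ℕ) (A : Matrix (Fin m) (Fin n) k) :
    ((lmulE L) ^ i) A = L ^ i * A := by
  induction i generalizing A with
  | zero => simp
  | succ i ih =>
    rw [pow_succ, Module.End.mul_apply, lmulE_apply, ih, pow_succ', Matrix.mul_assoc,
        ← Matrix.mul_assoc, ← pow_succ, pow_succ', Matrix.mul_assoc]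

lemma rmulE_pow_apply (R : Matrix (Fin n) (Fin n) k) (j : ℕ) (A : Matrix (Fin m) (Fin n) k) :
    (((rmulE R : Module.End k (Matrix (Fin m) (Fin n) k))) ^ j) A = A * R ^ j := by
  induction j generalizing A with
  | zero => simp
  | succ j ih =>
    rw [pow_succ, Module.End.mul_apply, rmulE_apply, ih, pow_succ', ← Matrix.mul_assoc]

lemma commute_lmulE_rmulE (L : Matrix (Fin m) (Fin m) k) (R : Matrix (Fin n) (Fin n) k) :
    Commute (lmulE L) (rmulE R : Module.End k (Matrix (Fin m) (Fin n) k)) := by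
  ext A
  simp [Matrix.mul_assoc]

end Aux

/-- key nilpotency lemma -/
lemma aeval_sub_algebraMap_eval_nilpotent {k : Type*} [Field k] {S : Type*} [CommRing S]
    [Algebra k S] (v : Fin 2 → S) (w : Fin 2 → k)
    (h : ∀ i, IsNilpotent (v i - algebraMap k S (w i))) (f : MvPolynomial (Fin 2) k) :
    IsNilpotent (aeval v f - algebraMap k S (eval w f)) := by
  induction f using MvPolynomial.induction_on with
  | C a => simp
  | add p q hp hq =>
    have := Commute.isNilpotent_add (Commute.all _ _) hp hq
    simpa [add_sub_add_comm] using this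
  | mul_X p i hp =>
    have key : aeval v (p * X i) - algebraMap k S (eval w (p * X i))
        = (aeval v p) * (v i - algebraMap k S (w i))
          + (aeval v p - algebraMap k S (eval w p)) * algebraMap k S (w i) := by
      simp only [_root_.map_mul, aeval_X, eval_X]
      ring
    rw [key]
    exact Commute.isNilpotent_add (Commute.all _ _)
      (Commute.isNilpotent_mul_left (Commute.all _ _) (h i))
      (Commute.isNilpotent_mul_right (Commute.all _ _) hp)

set_option maxHeartbeats 1000000 in
/-- Key algebraic lemma: the operator built from commuting `x`, `y` which are nilpotent
perturbations of `lam`, `mu` is a unit when `f (lam, mu) ≠ 0`. -/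
lemma isUnit_sum_of_commute {k E : Type*} [Field k] [Ring E] [Algebra k E]
    (x y : E) (hxy : Commute x y) (lam mu : k)
    (hx : IsNilpotent (x - algebraMap k E lam)) (hy : IsNilpotent (y - algebraMap k E mu))
    (f : MvPolynomial (Fin 2) k) (hf : eval ![lam, mu] f ≠ 0) :
    IsUnit (∑ d ∈ f.support, coeff d f • (x ^ (d 0) * y ^ (d 1))) := by
  classical
  set S := Algebra.adjoin k ({x, y} : Set E) with hS
  have hset : ∀ a ∈ ({x, y} : Set E), ∀ b ∈ ({x, y} : Set E), Commute a b := by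
    rintro a ha b hb
    simp only [Set.mem_insert_iff, Set.mem_singleton_iff] at ha hb
    rcases ha with rfl | rfl <;> rcases hb with rfl | rfl
    · rfl
    · exact hxy
    · exact hxy.symm
    · rfl
  have hcomm : ∀ a b : S, a * b = b * a := by
    rintro ⟨a, ha⟩ ⟨b, hb⟩
    refine Subtype.ext ?_
    show a * b = b * a
    refine Algebra.commute_of_mem_adjoin_of_forall_mem_commute hb fun c hc => ?_
    exact (Algebra.commute_of_mem_adjoin_of_forall_mem_commute ha
      fun d hd => hset c hc d hd).symm
  letI : CommRing S := { (inferInstance : Ring S) with mul_comm := hcomm }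
  have hxS : x ∈ S := Algebra.subset_adjoin (by simp)
  have hyS : y ∈ S := Algebra.subset_adjoin (by simp)
  set x' : S := ⟨x, hxS⟩ with hx'
  set y' : S := ⟨y, hyS⟩ with hy'
  have hnilS : ∀ z : S, IsNilpotent (z : E) → IsNilpotent z := by
    rintro z ⟨p, hp⟩
    exact ⟨p, Subtype.ext (by rw [SubmonoidClass.coe_pow]; exact hp)⟩
  have hv : ∀ i : Fin 2, IsNilpotent ((![x', y'] i) - algebraMap k S (![lam, mu] i)) := by
    intro i
    fin_cases i
    · refine hnilS _ ?_
      simpa using hx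
    · refine hnilS _ ?_
      simpa using hy
  set u : S := aeval ![x', y'] f with hu
  have hnil : IsNilpotent (u - algebraMap k S (eval ![lam, mu] f)) :=
    aeval_sub_algebraMap_eval_nilpotent ![x', y'] ![lam, mu] hv f
  have hcu : IsUnit (algebraMap k S (eval ![lam, mu] f)) :=
    (isUnit_iff_ne_zero.mpr hf).map (algebraMap k S)
  have hUnit : IsUnit u := by
    have h1 := hnil.isUnit_add_left_of_commute hcu (Commute.all _ _)
    simpa using h1
  have hcoe : (u : E) = ∑ d ∈ f.support, coeff d f • (x ^ (d 0) * y ^ (d 1)) := by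
    show S.val u = _
    rw [hu, aeval_def, eval₂_eq', map_sum]
    refine Finset.sum_congr rfl fun d _ => ?_
    rw [_root_.map_mul, AlgHom.commutes, ← Algebra.smul_def]
    congr 1
    rw [Fin.prod_univ_two, _root_.map_mul, map_pow, map_pow]
    rfl
  rw [← hcoe]
  exact hUnit.map S.val

/-- For `L = λI + F`, `R = μI + G` with `F`, `G` nilpotent upper triangular:
if `f(λ,μ) ≠ 0` then `A ↦ A^f` is a bijection of `k^{m×n}`: for every `B` there is
a unique `A` with `A^f = B`; in particular `A^f = 0` implies `A = 0`. -/
theorem matApply_bijective {k : Type*} [Field k] [IsAlgClosed k] {m n : ℕ}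
    (hm : 0 < m) (hn : 0 < n) (lam mu : k)
    (F : Matrix (Fin m) (Fin m) k) (G : Matrix (Fin n) (Fin n) k)
    (hFt : F.BlockTriangular (id : Fin m → Fin m)) (hFn : IsNilpotent F)
    (hGt : G.BlockTriangular (id : Fin n → Fin n)) (hGn : IsNilpotent G)
    (f : MvPolynomial (Fin 2) k)
    (hf : MvPolynomial.eval ![lam, mu] f ≠ 0) :
    Function.Bijective
        (fun A : Matrix (Fin m) (Fin n) k => matApply (lam • 1 + F) (mu • 1 + G) A f) ∧
      (∀ B : Matrix (Fin m) (Fin n) k,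
        ∃! A : Matrix (Fin m) (Fin n) k,
          matApply (lam • 1 + F) (mu • 1 + G) A f = B) ∧
      (∀ A : Matrix (Fin m) (Fin n) k,
        matApply (lam • 1 + F) (mu • 1 + G) A f = 0 → A = 0) := by
  classical
  set L : Matrix (Fin m) (Fin m) k := lam • 1 + F with hLdef
  set R : Matrix (Fin n) (Fin n) k := mu • 1 + G with hRdef
  set E := Module.End k (Matrix (Fin m) (Fin n) k) with hE
  set x : E := lmulE L with hx
  set y : E := rmulE R with hy
  have hxy : Commute x y := commute_lmulE_rmulE L R
  have hFnil : IsNilpotent (lmulE F : E) := by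
    obtain ⟨p, hp⟩ := hFn
    exact ⟨p, by ext A; simp [lmulE_pow_apply, hp]⟩
  have hGnil : IsNilpotent (rmulE G : E) := by
    obtain ⟨p, hp⟩ := hGn
    exact ⟨p, by ext A; simp [rmulE_pow_apply, hp]⟩
  have hxsub : x - algebraMap k E lam = lmulE F := by
    refine LinearMap.ext fun A => ?_
    rw [LinearMap.sub_apply, Module.algebraMap_end_apply]
    show L * A - lam • A = F * A
    rw [hLdef, Matrix.add_mul, Matrix.smul_mul, Matrix.one_mul, add_sub_cancel_left]
  have hysub : y - algebraMap k E mu = rmulE G := by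
    refine LinearMap.ext fun A => ?_
    rw [LinearMap.sub_apply, Module.algebraMap_end_apply]
    show A * R - mu • A = A * G
    rw [hRdef, Matrix.mul_add, Matrix.mul_smul, Matrix.mul_one, add_sub_cancel_left]
  have hUnit : IsUnit (∑ d ∈ f.support, coeff d f • (x ^ (d 0) * y ^ (d 1))) :=
    isUnit_sum_of_commute x y hxy lam mu (hxsub ▸ hFnil) (hysub ▸ hGnil) f hf
  set T : E := ∑ d ∈ f.support, coeff d f • (x ^ (d 0) * y ^ (d 1)) with hT
  have hTapp : ∀ A : Matrix (Fin m) (Fin n) k, T A = matApply L R A f := by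
    intro A
    rw [hT, matApply, LinearMap.sum_apply]
    refine Finset.sum_congr rfl fun d _ => ?_
    rw [LinearMap.smul_apply, Module.End.mul_apply, rmulE_pow_apply, lmulE_pow_apply,
      Matrix.mul_assoc]
  have hfun : (fun A : Matrix (Fin m) (Fin n) k => matApply L R A f) = ⇑T :=
    funext fun A => (hTapp A).symm
  have hbij : Function.Bijective
      (fun A : Matrix (Fin m) (Fin n) k => matApply L R A f) := by
    rw [hfun]
    exact (Module.End.isUnit_iff T).mp hUnit
  refine ⟨hbij, fun B => ?_, fun A hA => ?_⟩
  · obtain ⟨A, hA⟩ := hbij.surjective B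
    exact ⟨A, hA, fun A' hA' => hbij.injective (hA'.trans hA.symm)⟩
  · have h0 : matApply L R (0 : Matrix (Fin m) (Fin n) k) f = 0 := by
      simp [matApply]
    exact hbij.injective (hA.trans h0.symm)
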